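/- Let 2 ≤ p ≤ q, let u ≥ v ≥ 0 be real numbers, and fix t ∈ (0,1). Then for any positive integer n and nonnegative n-tuples u, v with uᵢ ≥ vᵢ: ((∑(uᵢ+tvᵢ)^p)^(q/p−1))·(∑vᵢ(uᵢ+tvᵢ)^(p−1)) ≥ ((∑(uᵢ−tvᵢ)^p)^(q/p−1))·(∑vᵢ(uᵢ−tvᵢ)^(p−1)) + 2^(q−1) t^(q−1) (∑vᵢ^p)^(q/p). -/

import Mathlib

lemma rpow_superadd {a b r : ℝ} (ha : 0 ≤ a) (hb : 0 ≤ b) (hr : 1 ≤ r) :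
    a ^ r + b ^ r ≤ (a + b) ^ r := by
  have h := NNReal.coe_le_coe.mpr
    (NNReal.add_rpow_le_rpow_add (⟨a, ha⟩ : NNReal) (⟨b, hb⟩ : NNReal) hr)
  push_cast [NNReal.coe_rpow] at h
  exact h

theorem stmt18 (n : ℕ) (hn : 0 < n) (p q t : ℝ) (hp : 2 ≤ p) (hpq : p ≤ q)
    (ht0 : 0 < t) (ht1 : t < 1) (u v : Fin n → ℝ)
    (hv : ∀ i, 0 ≤ v i) (huv : ∀ i, v i ≤ u i) :
    (∑ i, (u i + t * v i) ^ p) ^ (q / p - 1) * (∑ i, v i * (u i + t * v i) ^ (p - 1)) ≥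
      (∑ i, (u i - t * v i) ^ p) ^ (q / p - 1) * (∑ i, v i * (u i - t * v i) ^ (p - 1)) +
        2 ^ (q - 1) * t ^ (q - 1) * (∑ i, v i ^ p) ^ (q / p) := by
  have hp0 : (0:ℝ) < p := by linarith
  have hr : 0 ≤ q / p - 1 := by
    rw [sub_nonneg, le_div_iff₀ hp0]; linarith
  have h2t : (0:ℝ) < 2 * t := by linarith
  have hsub : ∀ i, 0 ≤ u i - t * v i := fun i => by nlinarith [hv i, huv i]
  have hadd : ∀ i, 0 ≤ u i + t * v i := fun i => by nlinarith [hv i, huv i]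
  set V := ∑ i, v i ^ p with hV
  have hVnn : 0 ≤ V := Finset.sum_nonneg fun i _ => Real.rpow_nonneg (hv i) p
  set A := ∑ i, (u i + t * v i) ^ p with hA
  set B := ∑ i, (u i - t * v i) ^ p with hB
  set Sm := ∑ i, v i * (u i - t * v i) ^ (p - 1) with hSm
  set Sp := ∑ i, v i * (u i + t * v i) ^ (p - 1) with hSp
  have hAnn : 0 ≤ A := Finset.sum_nonneg fun i _ => Real.rpow_nonneg (hadd i) p
  have hBnn : 0 ≤ B := Finset.sum_nonneg fun i _ => Real.rpow_nonneg (hsub i) p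
  have hBA : B ≤ A := Finset.sum_le_sum fun i _ =>
    Real.rpow_le_rpow (hsub i) (by nlinarith [hv i]) hp0.le
  have hAlb : (2*t)^p * V ≤ A := by
    rw [hV, Finset.mul_sum]
    refine Finset.sum_le_sum fun i _ => ?_
    rw [← Real.mul_rpow h2t.le (hv i)]
    exact Real.rpow_le_rpow (mul_nonneg (mul_nonneg (by norm_num) ht0.le) (hv i))
      (by nlinarith [hv i, huv i]) hp0.le
  have hSmnn : 0 ≤ Sm :=
    Finset.sum_nonneg fun i _ => mul_nonneg (hv i) (Real.rpow_nonneg (hsub i) _)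
  have hS : Sm + (2*t)^(p-1) * V ≤ Sp := by
    rw [hV, hSm, hSp, Finset.mul_sum, ← Finset.sum_add_distrib]
    refine Finset.sum_le_sum fun i _ => ?_
    have key := rpow_superadd (hsub i)
      (mul_nonneg (mul_nonneg (by norm_num) ht0.le) (hv i) : (0:ℝ) ≤ 2*t*v i)
      (by linarith : 1 ≤ p - 1)
    have heq : (u i - t*v i) + 2*t*v i = u i + t * v i := by ring
    rw [heq] at key
    have hvp : (2*t)^(p-1) * v i ^ p = v i * (2*t*v i)^(p-1) := by
      rw [Real.mul_rpow h2t.le (hv i)]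
      have h1 : v i ^ p = v i ^ (1 + (p-1)) := by ring_nf
      rw [h1, Real.rpow_add' (hv i) (by intro h; linarith [h] ), Real.rpow_one]
      ring
    rw [hvp]
    calc v i * (u i - t*v i)^(p-1) + v i * (2*t*v i)^(p-1)
        = v i * ((u i - t*v i)^(p-1) + (2*t*v i)^(p-1)) := by ring
      _ ≤ v i * (u i + t*v i)^(p-1) := mul_le_mul_of_nonneg_left key (hv i)
  have hqp0 : (0:ℝ) < q / p := div_pos (by linarith) hp0
  have heq2 : ((2*t)^p * V)^(q/p-1) * ((2*t)^(p-1) * V) = 2^(q-1) * t^(q-1) * V^(q/p) := by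
    have h1 : ((2*t)^p : ℝ)^(q/p-1) = (2*t)^(p*(q/p-1)) :=
      (Real.rpow_mul h2t.le p (q/p-1)).symm
    have h2 : (2*t)^(p*(q/p-1)) * (2*t)^(p-1) = (2*t)^(q-1) := by
      rw [← Real.rpow_add h2t]; congr 1; field_simp; ring
    have h3 : V^(q/p-1) * V = V^(q/p) := by
      have h := Real.rpow_add' hVnn (show (q/p-1) + 1 ≠ 0 by
        rw [show q/p - 1 + 1 = q/p by ring]; exact hqp0.ne')
      rw [Real.rpow_one] at h
      rw [← h]; congr 1; ring
    rw [Real.mul_rpow (Real.rpow_nonneg h2t.le p) hVnn, h1]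
    calc (2*t)^(p*(q/p-1)) * V^(q/p-1) * ((2*t)^(p-1) * V)
        = ((2*t)^(p*(q/p-1)) * (2*t)^(p-1)) * (V^(q/p-1) * V) := by ring
      _ = (2*t)^(q-1) * V^(q/p) := by rw [h2, h3]
      _ = 2^(q-1) * t^(q-1) * V^(q/p) := by
          rw [Real.mul_rpow (by norm_num : (0:ℝ) ≤ 2) ht0.le]
  have step1 : A^(q/p-1) * (Sm + (2*t)^(p-1)*V) ≤ A^(q/p-1) * Sp :=
    mul_le_mul_of_nonneg_left hS (Real.rpow_nonneg hAnn _)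
  have step2 : B^(q/p-1) * Sm ≤ A^(q/p-1) * Sm :=
    mul_le_mul_of_nonneg_right (Real.rpow_le_rpow hBnn hBA hr) hSmnn
  have step3 : ((2*t)^p * V)^(q/p-1) * ((2*t)^(p-1)*V) ≤ A^(q/p-1) * ((2*t)^(p-1)*V) :=
    mul_le_mul_of_nonneg_right (Real.rpow_le_rpow (by positivity) hAlb hr) (by positivity)
  calc B^(q/p-1) * Sm + 2^(q-1) * t^(q-1) * V^(q/p)
      = B^(q/p-1) * Sm + ((2*t)^p * V)^(q/p-1) * ((2*t)^(p-1)*V) := by rw [heq2]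
    _ ≤ A^(q/p-1) * Sm + A^(q/p-1) * ((2*t)^(p-1)*V) := add_le_add step2 step3
    _ = A^(q/p-1) * (Sm + (2*t)^(p-1)*V) := by ring
    _ ≤ A^(q/p-1) * Sp := step1
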